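/- Let m ≥ 3 and let G = ℝ/mℤ with its Haar probability measure. Let (R_{ij}), for ordered pairs i ≠ j with i,j ∈ {2,…,m}, be independent random variables each distributed according to the Haar (uniform) measure on G, and define Z_i = Σ_{j∈{2,…,m}, j≠i} (R_{ji} − R_{ij}) ∈ G for i = 2,…,m. Then the law of the random vector Z = (Z_2,…,Z_m) in G^{m−1} is invariant under translation by any element of the zero-sum subgroup: for every h ∈ G^{m−1} with Σ_{i=2}^m h_i = 0, the random vectors Z and Z + h have the same distribution. Equivalently, Z is uniformly distributed on the zero-sum subgroup { u ∈ G^{m−1} : Σ_{i=2}^m u_i = 0 }. -/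

import Mathlib

open MeasureTheory ProbabilityTheory

/-- **Uniformity of the noise in the Secure-Sum secrecy proof.**
Let `m ≥ 3`, `G = ℝ/mℤ` with its Haar probability measure, and let `(R i j)` (for ordered
pairs `i ≠ j` of parties among `2, …, m`) be independent random variables, each Haar-uniform
on `G`.  Put `Z i = ∑_{j ≠ i} (R j i - R i j)`.  Then the law of `Z = (Z 2, …, Z m)` is
invariant under translation by any element `h` of the zero-sum subgroup of `G^(m-1)`;
equivalently, `Z` is uniform on the zero-sum subgroup. -/
theorem secure_sum_noise_uniform (m : ℕ) (hm : 3 ≤ m) [Fact ((0 : ℝ) < (m : ℝ))]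
    {Ω : Type*} [MeasurableSpace Ω] (μ : Measure Ω) [IsProbabilityMeasure μ]
    (R : {p : Fin (m - 1) × Fin (m - 1) // p.1 ≠ p.2} → Ω → AddCircle (m : ℝ))
    (hmeas : ∀ p, Measurable (R p))
    (hindep : iIndepFun R μ)
    (hunif : ∀ p, Measure.map (R p) μ = AddCircle.haarAddCircle)
    (Z : Ω → Fin (m - 1) → AddCircle (m : ℝ))
    (hZ : ∀ ω i, Z ω i =
      ∑ j ∈ Finset.univ.erase i,
        ((if h : j ≠ i then R ⟨(j, i), h⟩ ω else 0) -
          (if h : i ≠ j then R ⟨(i, j), h⟩ ω else 0)))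
    (h : Fin (m - 1) → AddCircle (m : ℝ)) (hsum : ∑ i, h i = 0) :
    Measure.map (fun ω i => Z ω i + h i) μ = Measure.map Z μ := by
  have hm1 : 0 < m - 1 := by omega
  let G := AddCircle (m : ℝ)
  let ι := {p : Fin (m - 1) × Fin (m - 1) // p.1 ≠ p.2}
  let z : Fin (m - 1) := ⟨0, hm1⟩
  let c : ι → G := fun p => if p.1.1 = z then h p.1.2 else 0
  let Rvec : Ω → ι → G := fun ω p => R p ω
  let F : (ι → G) → Fin (m - 1) → G := fun r i =>
    ∑ j ∈ Finset.univ.erase i,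
      ((if hji : j ≠ i then r ⟨(j, i), hji⟩ else 0) -
        (if hij : i ≠ j then r ⟨(i, j), hij⟩ else 0))
  have hFmeas : Measurable F := by
    apply measurable_pi_lambda
    intro i
    apply Finset.measurable_sum
    intro j _
    apply Measurable.sub <;>
    · split
      · exact measurable_pi_apply _
      · exact measurable_const
  have hRvecMeas : Measurable Rvec := measurable_pi_lambda _ fun p => hmeas p
  -- the joint law of the `R p` is the product Haar measure
  have hlaw : Measure.map Rvec μ
      = Measure.pi (fun _ : ι => (AddCircle.haarAddCircle : Measure G)) := by
    refine (Measure.pi_eq fun s hs => ?_).symm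
    rw [Measure.map_apply hRvecMeas (MeasurableSet.univ_pi hs)]
    have hpre : Rvec ⁻¹' Set.pi Set.univ s = ⋂ p ∈ Finset.univ, R p ⁻¹' s p := by
      ext ω
      simp only [Set.mem_preimage, Set.mem_pi, Set.mem_univ, true_implies, Set.mem_iInter,
        Finset.mem_univ, Subtype.forall, Prod.forall]
      exact ⟨fun H a b hb => H ⟨(a, b), hb⟩, fun H p => H p.1.1 p.1.2 p.2⟩
    rw [hpre, hindep.measure_inter_preimage_eq_mul Finset.univ (fun p _ => hs p)]
    refine Finset.prod_congr rfl fun p _ => ?_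
    rw [← hunif p, Measure.map_apply (hmeas p) (hs p)]
  -- the key algebraic identity
  have key : ∀ r : ι → G, F (r + c) = fun i => F r i + h i := by
    intro r
    funext i
    show (∑ j ∈ Finset.univ.erase i,
        ((if hji : j ≠ i then r ⟨(j, i), hji⟩ + c ⟨(j, i), hji⟩ else 0) -
          (if hij : i ≠ j then r ⟨(i, j), hij⟩ + c ⟨(i, j), hij⟩ else 0))) = F r i + h i
    have step : ∀ j ∈ Finset.univ.erase i,
        ((if hji : j ≠ i then r ⟨(j, i), hji⟩ + c ⟨(j, i), hji⟩ else 0) -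
          (if hij : i ≠ j then r ⟨(i, j), hij⟩ + c ⟨(i, j), hij⟩ else 0))
        = ((if hji : j ≠ i then r ⟨(j, i), hji⟩ else 0) -
            (if hij : i ≠ j then r ⟨(i, j), hij⟩ else 0))
          + ((if hji : j ≠ i then c ⟨(j, i), hji⟩ else 0) -
            (if hij : i ≠ j then c ⟨(i, j), hij⟩ else 0)) := by
      intro j _
      rcases eq_or_ne j i with rfl | hji
      · simp
      · have hij : i ≠ j := hji.symm
        rw [dif_pos hji, dif_pos hij, dif_pos hji, dif_pos hij, dif_pos hji, dif_pos hij]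
        abel
    rw [Finset.sum_congr rfl step, Finset.sum_add_distrib]
    congr 1
    -- the `c` part sums to `h i`
    have hcsum : ∀ j ∈ Finset.univ.erase i,
        ((if hji : j ≠ i then c ⟨(j, i), hji⟩ else 0) -
          (if hij : i ≠ j then c ⟨(i, j), hij⟩ else 0))
        = (if j = z then h i else 0) - (if i = z then h j else 0) := by
      intro j hj
      have hji : j ≠ i := (Finset.mem_erase.mp hj).1
      rw [dif_pos hji, dif_pos hji.symm]
    rw [Finset.sum_congr rfl hcsum, Finset.sum_sub_distrib]
    by_cases hiz : i = z
    · have h1 : (∑ j ∈ Finset.univ.erase i, if j = z then h i else 0) = 0 := by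
        apply Finset.sum_eq_zero
        intro j hj
        exact if_neg (hiz ▸ (Finset.mem_erase.mp hj).1)
      have h2 : (∑ j ∈ Finset.univ.erase i, if i = z then h j else 0)
          = ∑ j ∈ Finset.univ.erase i, h j := by
        refine Finset.sum_congr rfl fun j _ => if_pos hiz
      rw [h1, h2]
      have h3 : h i + ∑ j ∈ Finset.univ.erase i, h j = 0 := by
        rw [Finset.add_sum_erase Finset.univ h (Finset.mem_univ i), hsum]
      have h4 : ∑ j ∈ Finset.univ.erase i, h j = -h i :=
        eq_neg_of_add_eq_zero_right h3
      rw [h4]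
      abel
    · have h1 : (∑ j ∈ Finset.univ.erase i, if j = z then h i else 0) = h i := by
        rw [Finset.sum_ite_eq' (Finset.univ.erase i) z (fun _ => h i),
          if_pos (Finset.mem_erase.mpr ⟨fun hc => hiz hc.symm, Finset.mem_univ z⟩)]
      have h2 : (∑ j ∈ Finset.univ.erase i, if i = z then h j else 0) = 0 :=
        Finset.sum_eq_zero fun j _ => if_neg hiz
      rw [h1, h2, sub_zero]
  -- rewrite both sides through `F` and `Rvec`
  have e2 : Z = F ∘ Rvec := by
    funext ω
    funext i
    exact hZ ω i
  have e1 : (fun ω i => Z ω i + h i) = (F ∘ (fun r : ι → G => r + c)) ∘ Rvec := by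
    funext ω
    show (fun i => Z ω i + h i) = F (Rvec ω + c)
    rw [key (Rvec ω)]
    funext i
    rw [hZ ω i]
  have hshift : Measurable (fun r : ι → G => r + c) := measurable_add_const c
  rw [e1, e2]
  rw [← Measure.map_map (hFmeas.comp hshift) hRvecMeas,
     ← Measure.map_map hFmeas hRvecMeas, hlaw,
     ← Measure.map_map hFmeas hshift,
     map_add_right_eq_self _ c]
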